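/- Let A and B be bounded self-adjoint operators on a real Hilbert space H, and let U and W be closed subspaces of H such that the operator P_W P_U is Hilbert–Schmidt. Suppose the spectrum of the compression P_U A|_U (as an operator on U) is contained in the interval [a, b], and the spectrum of the compression P_W B|_W (as an operator on W) is contained in (−∞, a − δ] ∪ [b + δ, ∞) for some δ > 0. Then δ · ‖P_W P_U‖_F ≤ ‖P_W P_U A P_U − P_W B P_W P_U‖_F. -/

import Mathlib

open scoped RealInnerProductSpace ENNReal
open Submodule Filter

noncomputable section

variable {H : Type*} [NormedAddCommGroup H] [InnerProductSpace ℝ H] [CompleteSpace H]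

/-- Orthogonal projection onto `U`, as an operator `H → H` (defined to be `0` in the
degenerate case where `U` admits no orthogonal projection). -/
noncomputable def proj (U : Submodule ℝ H) : H →L[ℝ] H := by
  classical
  exact if h : HasOrthogonalProjection U then
    (haveI := h; U.subtypeL ∘L orthogonalProjection U)
  else 0

/-- Squared Hilbert–Schmidt norm of an operator, computed in a fixed Hilbert basis of `H`. -/
noncomputable def hsNormSq (A : H →L[ℝ] H) : ℝ≥0∞ :=
  ∑' i : (exists_hilbertBasis ℝ H).choose,
    (‖A ((exists_hilbertBasis ℝ H).choose_spec.choose i)‖₊ : ℝ≥0∞) ^ 2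

/-- Hilbert–Schmidt (Frobenius) norm of an operator. -/
noncomputable def hsNorm (A : H →L[ℝ] H) : ℝ := Real.sqrt (hsNormSq A).toReal

/-- Projection distance `d_F(U, W) = ‖P_{Wᗮ} P_U‖_F`. -/
noncomputable def dF (U W : Submodule ℝ H) : ℝ := hsNorm ((proj Wᗮ) ∘L (proj U))

/-- Gap distance `d₂(U, W) = ‖P_{Wᗮ} P_U‖₂`. -/
noncomputable def d2 (U W : Submodule ℝ H) : ℝ := ‖(proj Wᗮ) ∘L (proj U)‖


/-- The compression `P_U A|_U` of an operator `A` to a subspace `U`. -/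
noncomputable def compressOp {H : Type*} [NormedAddCommGroup H] [InnerProductSpace ℝ H]
    [CompleteSpace H] (U : Submodule ℝ H) [HasOrthogonalProjection U] (A : H →L[ℝ] H) :
    U →L[ℝ] U :=
  orthogonalProjection U ∘L (A ∘L U.subtypeL)


section Aux
open ContinuousLinearMap
open scoped NNReal
variable {H : Type*} [NormedAddCommGroup H] [InnerProductSpace ℝ H] [CompleteSpace H]

/-- The fixed Hilbert basis used in the definition of `hsNormSq`. -/
noncomputable def hb : HilbertBasis (exists_hilbertBasis ℝ H).choose ℝ H :=
  (exists_hilbertBasis ℝ H).choose_spec.choose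

lemma hsNormSq_def (A : H →L[ℝ] H) :
    hsNormSq A = ∑' i, (‖A (hb i)‖₊ : ℝ≥0∞) ^ 2 := rfl

lemma nn_parseval (x : H) : (‖x‖₊ : ℝ≥0∞)^2 = ∑' i, (‖(⟪x, hb i⟫ : ℝ)‖₊ : ℝ≥0∞)^2 := by
  have h : HasSum (fun i => (⟪x, hb i⟫ : ℝ)^2) (‖x‖^2) := by
    have := (hb (H := H)).hasSum_inner_mul_inner x x
    simpa [real_inner_comm, sq, real_inner_self_eq_norm_sq] using this
  calc (‖x‖₊ : ℝ≥0∞)^2 = ENNReal.ofReal (‖x‖^2) := by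
        rw [← enorm_eq_nnnorm, ← ofReal_norm, ← ENNReal.ofReal_pow (norm_nonneg x)]
    _ = ENNReal.ofReal (∑' i, (⟪x, hb i⟫ : ℝ)^2) := by rw [h.tsum_eq]
    _ = ∑' i, ENNReal.ofReal ((⟪x, hb i⟫ : ℝ)^2) :=
        ENNReal.ofReal_tsum_of_nonneg (fun i => sq_nonneg _) h.summable
    _ = ∑' i, (‖(⟪x, hb i⟫ : ℝ)‖₊ : ℝ≥0∞)^2 := by
        refine tsum_congr fun i => ?_
        rw [← enorm_eq_nnnorm, Real.enorm_eq_ofReal_abs, ← ENNReal.ofReal_pow (abs_nonneg _), sq_abs]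

lemma hsq_adjoint (X : H →L[ℝ] H) : hsNormSq (adjoint X) = hsNormSq X := by
  rw [hsNormSq_def, hsNormSq_def]
  calc ∑' i, (‖adjoint X (hb i)‖₊ : ℝ≥0∞)^2
      = ∑' i, ∑' j, (‖(⟪X (hb j), hb i⟫ : ℝ)‖₊ : ℝ≥0∞)^2 := by
        refine tsum_congr fun i => ?_
        rw [nn_parseval]
        refine tsum_congr fun j => ?_
        rw [adjoint_inner_left, real_inner_comm]
    _ = ∑' j, ∑' i, (‖(⟪X (hb j), hb i⟫ : ℝ)‖₊ : ℝ≥0∞)^2 := ENNReal.tsum_comm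
    _ = ∑' j, (‖X (hb j)‖₊ : ℝ≥0∞)^2 := by
        refine tsum_congr fun j => ?_
        rw [← nn_parseval]

lemma hsq_comp_le (Z X : H →L[ℝ] H) : hsNormSq (Z ∘L X) ≤ (‖Z‖₊ : ℝ≥0∞)^2 * hsNormSq X := by
  rw [hsNormSq_def, hsNormSq_def, ← ENNReal.tsum_mul_left]
  refine ENNReal.summable.tsum_le_tsum (fun i => ?_) ENNReal.summable
  rw [← mul_pow]
  have : (‖(Z ∘L X) (hb i)‖₊ : ℝ≥0∞) ≤ (‖Z‖₊ : ℝ≥0∞) * ‖X (hb i)‖₊ := by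
    exact_mod_cast Z.le_opNNNorm (X (hb i))
  exact pow_le_pow_left' this 2

lemma hsq_comp_right_le (X Z : H →L[ℝ] H) :
    hsNormSq (X ∘L Z) ≤ (‖Z‖₊ : ℝ≥0∞)^2 * hsNormSq X := by
  have h1 : hsNormSq (X ∘L Z) = hsNormSq (adjoint (X ∘L Z)) := (hsq_adjoint _).symm
  rw [h1, adjoint_comp]
  calc hsNormSq (adjoint Z ∘L adjoint X) ≤ (‖adjoint Z‖₊ : ℝ≥0∞)^2 * hsNormSq (adjoint X) :=
        hsq_comp_le _ _
    _ = (‖Z‖₊ : ℝ≥0∞)^2 * hsNormSq X := by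
        have hn : ‖adjoint Z‖₊ = ‖Z‖₊ := NNReal.coe_injective (by simp [adjoint.norm_map])
        rw [hsq_adjoint, hn]


lemma ennreal_sq_add_le (p q : ℝ≥0∞) : (p + q)^2 ≤ 4 * (p^2 + q^2) := by
  calc (p + q)^2 ≤ (2 * (p ⊔ q))^2 := by
        refine pow_le_pow_left' ?_ 2
        rw [two_mul]; exact add_le_add le_sup_left le_sup_right
    _ = 4 * (p ⊔ q)^2 := by ring
    _ ≤ 4 * (p^2 + q^2) := by
        gcongr
        rcases le_total p q with h | h
        · rw [sup_eq_right.2 h]; exact le_add_self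
        · rw [sup_eq_left.2 h]; exact le_self_add

lemma hsq_neg (X : H →L[ℝ] H) : hsNormSq (-X) = hsNormSq X := by
  rw [hsNormSq_def, hsNormSq_def]; simp

lemma hsq_sub_ne_top {X Y : H →L[ℝ] H} (hX : hsNormSq X ≠ ⊤) (hY : hsNormSq Y ≠ ⊤) :
    hsNormSq (X - Y) ≠ ⊤ := by
  have h : hsNormSq (X - Y) ≤ 4 * (hsNormSq X + hsNormSq Y) := by
    rw [hsNormSq_def, hsNormSq_def, hsNormSq_def, ← ENNReal.tsum_add, ← ENNReal.tsum_mul_left]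
    refine ENNReal.summable.tsum_le_tsum (fun i => ?_) ENNReal.summable
    have h1 : (‖(X - Y) (hb i)‖₊ : ℝ≥0∞) ≤ ‖X (hb i)‖₊ + ‖Y (hb i)‖₊ := by
      exact_mod_cast nnnorm_sub_le _ _
    calc (‖(X - Y) (hb i)‖₊ : ℝ≥0∞)^2 ≤ ((‖X (hb i)‖₊ : ℝ≥0∞) + ‖Y (hb i)‖₊)^2 :=
          pow_le_pow_left' h1 2
      _ ≤ 4 * ((‖X (hb i)‖₊ : ℝ≥0∞)^2 + (‖Y (hb i)‖₊ : ℝ≥0∞)^2) := ennreal_sq_add_le _ _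
  exact ne_top_of_le_ne_top
    (ENNReal.mul_ne_top (by norm_num) (ENNReal.add_ne_top.2 ⟨hX, hY⟩)) h

lemma hsNorm_nonneg (X : H →L[ℝ] H) : 0 ≤ hsNorm X := Real.sqrt_nonneg _

lemma hs_of_le {X Y : H →L[ℝ] H} {c : ℝ≥0}
    (h : hsNormSq X ≤ (c : ℝ≥0∞)^2 * hsNormSq Y) (hY : hsNormSq Y ≠ ⊤) :
    hsNorm X ≤ (c : ℝ) * hsNorm Y := by
  have hfin : ((c : ℝ≥0∞)^2 * hsNormSq Y) ≠ ⊤ :=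
    ENNReal.mul_ne_top (by simp [ENNReal.pow_ne_top]) hY
  have h1 : (hsNormSq X).toReal ≤ ((c : ℝ≥0∞)^2 * hsNormSq Y).toReal :=
    ENNReal.toReal_mono hfin h
  have h2 : ((c : ℝ≥0∞)^2 * hsNormSq Y).toReal = (c : ℝ)^2 * (hsNormSq Y).toReal := by
    rw [ENNReal.toReal_mul]
    simp
  rw [hsNorm, hsNorm]
  calc Real.sqrt (hsNormSq X).toReal ≤ Real.sqrt ((c : ℝ)^2 * (hsNormSq Y).toReal) := by
        rw [← h2]; exact Real.sqrt_le_sqrt h1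
    _ = (c : ℝ) * Real.sqrt (hsNormSq Y).toReal := by
        rw [Real.sqrt_mul (sq_nonneg _), Real.sqrt_sq c.coe_nonneg]

lemma hsNorm_comp_le (Z : H →L[ℝ] H) {X : H →L[ℝ] H} (hX : hsNormSq X ≠ ⊤) :
    hsNorm (Z ∘L X) ≤ ‖Z‖ * hsNorm X := by
  have := hs_of_le (hsq_comp_le Z X) hX
  simpa using this

lemma hsNorm_comp_right_le {X : H →L[ℝ] H} (Z : H →L[ℝ] H) (hX : hsNormSq X ≠ ⊤) :
    hsNorm (X ∘L Z) ≤ ‖Z‖ * hsNorm X := by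
  have := hs_of_le (hsq_comp_right_le X Z) hX
  simpa using this

lemma summable_of_hsq_ne_top {X : H →L[ℝ] H} (hX : hsNormSq X ≠ ⊤) :
    Summable fun i => ‖X (hb i)‖₊ ^ (2:ℝ) := by
  have hdef : hsNormSq X = ∑' i, ((‖X (hb i)‖₊ ^ 2 : ℝ≥0) : ℝ≥0∞) := by
    rw [hsNormSq_def]
    exact tsum_congr fun i => by rw [ENNReal.coe_pow]
  have : Summable fun i => ‖X (hb i)‖₊ ^ (2:ℕ) := by
    rw [← ENNReal.tsum_coe_ne_top_iff_summable, ← hdef]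
    exact hX
  convert this using 2 with i
  rw [← NNReal.rpow_natCast]; norm_num

lemma hsNorm_eq_coe {X : H →L[ℝ] H} (hX : hsNormSq X ≠ ⊤) :
    hsNorm X = ((∑' i, ‖X (hb i)‖₊ ^ (2:ℝ) : ℝ≥0) ^ (1/2 : ℝ) : ℝ≥0) := by
  have hs : Summable fun i => ‖X (hb i)‖₊ ^ (2:ℕ) := by
    have := summable_of_hsq_ne_top hX
    convert this using 2 with i
    rw [← NNReal.rpow_natCast]; norm_num
  have h1 : hsNormSq X = ((∑' i, ‖X (hb i)‖₊ ^ (2:ℕ) : ℝ≥0) : ℝ≥0∞) := by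
    rw [ENNReal.coe_tsum hs, hsNormSq_def]
    exact tsum_congr fun i => by rw [ENNReal.coe_pow]
  rw [hsNorm, h1, ENNReal.coe_toReal, NNReal.coe_rpow, Real.sqrt_eq_rpow]
  congr 2
  exact tsum_congr fun i => by rw [← NNReal.rpow_natCast]; norm_num

lemma hsNorm_add_le {X Y : H →L[ℝ] H} (hX : hsNormSq X ≠ ⊤) (hY : hsNormSq Y ≠ ⊤) :
    hsNorm (X + Y) ≤ hsNorm X + hsNorm Y := by
  set f : (exists_hilbertBasis ℝ H).choose → ℝ≥0 := fun i => ‖X (hb i)‖₊ with hf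
  set g : (exists_hilbertBasis ℝ H).choose → ℝ≥0 := fun i => ‖Y (hb i)‖₊ with hg
  have hfs := summable_of_hsq_ne_top hX
  have hgs := summable_of_hsq_ne_top hY
  obtain ⟨hsum, hkey⟩ := NNReal.Lp_add_le_tsum (f := f) (g := g) one_le_two hfs hgs
  have hpt : ∀ i, ‖(X + Y) (hb i)‖₊ ^ (2:ℝ) ≤ (f i + g i) ^ (2:ℝ) := fun i =>
    NNReal.rpow_le_rpow (by simpa [f, g] using nnnorm_add_le (X (hb i)) (Y (hb i))) (by norm_num)
  have hXYs : Summable fun i => ‖(X + Y) (hb i)‖₊ ^ (2:ℝ) :=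
    NNReal.summable_of_le hpt hsum
  have hXYfin : hsNormSq (X + Y) ≠ ⊤ := by
    rw [← ENNReal.tsum_coe_ne_top_iff_summable] at hXYs
    rw [hsNormSq_def]
    convert hXYs using 1
    refine tsum_congr fun i => ?_
    rw [ENNReal.coe_rpow_of_nonneg _ (by norm_num : (0:ℝ) ≤ 2)]
    rw [← ENNReal.rpow_natCast]; norm_num
  rw [hsNorm_eq_coe hXYfin, hsNorm_eq_coe hX, hsNorm_eq_coe hY]
  have h1 : (∑' i, ‖(X + Y) (hb i)‖₊ ^ (2:ℝ)) ≤ ∑' i, (f i + g i) ^ (2:ℝ) :=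
    hXYs.tsum_le_tsum hpt hsum
  have h2 : (∑' i, ‖(X + Y) (hb i)‖₊ ^ (2:ℝ)) ^ (1/2:ℝ) ≤
      ((∑' i, f i ^ (2:ℝ)) ^ (1/2:ℝ) + (∑' i, g i ^ (2:ℝ)) ^ (1/2:ℝ)) :=
    le_trans (NNReal.rpow_le_rpow h1 (by norm_num)) hkey
  exact_mod_cast h2


end Aux

section SpecAux
open ContinuousLinearMap
open scoped NNReal
variable {V : Type*} [NormedAddCommGroup V] [InnerProductSpace ℝ V] [CompleteSpace V]

/-- For a bounded symmetric operator on a nontrivial real Hilbert space, the supremum of the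
quadratic form over the unit sphere belongs to the real spectrum. -/
lemma sup_quadform_mem_spectrum [Nontrivial V] (T : V →L[ℝ] V)
    (hT : ∀ x y : V, ⟪T x, y⟫ = ⟪x, T y⟫) :
    sSup {r : ℝ | ∃ x : V, ‖x‖ = 1 ∧ ⟪T x, x⟫ = r} ∈ spectrum ℝ T := by
  set s := {r : ℝ | ∃ x : V, ‖x‖ = 1 ∧ ⟪T x, x⟫ = r} with hs
  obtain ⟨x₀, hx₀⟩ := exists_ne (0 : V)
  have hx₀' : ‖‖x₀‖⁻¹ • x₀‖ = 1 := norm_smul_inv_norm hx₀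
  have hne : s.Nonempty := ⟨_, _, hx₀', rfl⟩
  have hbdd : BddAbove s := by
    refine ⟨‖T‖, ?_⟩
    rintro r ⟨x, hx, rfl⟩
    calc ⟪T x, x⟫ ≤ ‖T x‖ * ‖x‖ := real_inner_le_norm _ _
      _ ≤ ‖T‖ * ‖x‖ * ‖x‖ := by gcongr; exact T.le_opNorm x
      _ = ‖T‖ := by rw [hx]; ring
  set M := sSup s with hM
  by_contra hMs
  rw [spectrum.notMem_iff] at hMs
  obtain ⟨u, hu⟩ := hMs
  set G : V →L[ℝ] V := algebraMap ℝ (V →L[ℝ] V) M - T with hG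
  have hGapp : ∀ x : V, G x = M • x - T x := fun x => by
    simp [hG, Algebra.algebraMap_eq_smul_one, sub_apply, smul_apply]
  have hGsym : ∀ x y : V, ⟪G x, y⟫ = ⟪x, G y⟫ := by
    intro x y
    simp only [hGapp, inner_sub_left, inner_sub_right, real_inner_smul_left,
      real_inner_smul_right, hT, real_inner_comm x y]
  have hGpos : ∀ x : V, 0 ≤ ⟪G x, x⟫ := by
    intro x
    rcases eq_or_ne x 0 with rfl | hx
    · simp
    · have h1 : ⟪T (‖x‖⁻¹ • x), ‖x‖⁻¹ • x⟫ ≤ M := le_csSup hbdd ⟨_, norm_smul_inv_norm hx, rfl⟩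
      have h2 : ⟪T (‖x‖⁻¹ • x), ‖x‖⁻¹ • x⟫ = ‖x‖⁻¹ * (‖x‖⁻¹ * ⟪T x, x⟫) := by
        rw [map_smul]
        simp only [real_inner_smul_left, real_inner_smul_right]
      have hxpos : (0:ℝ) < ‖x‖ := norm_pos_iff.mpr hx
      have h3 : ⟪T x, x⟫ ≤ M * ‖x‖^2 := by
        have := h1
        rw [h2] at this
        have h4 := mul_le_mul_of_nonneg_left this (le_of_lt (mul_pos hxpos hxpos))
        calc ⟪T x, x⟫ = (‖x‖ * ‖x‖) * (‖x‖⁻¹ * (‖x‖⁻¹ * ⟪T x, x⟫)) := by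
              field_simp
            _ ≤ (‖x‖ * ‖x‖) * M := h4
            _ = M * ‖x‖^2 := by ring
      have hfin : ⟪G x, x⟫ = M * ‖x‖^2 - ⟪T x, x⟫ := by
        rw [hGapp x, inner_sub_left, real_inner_smul_left, real_inner_self_eq_norm_sq]
      rw [hfin]
      linarith
  -- generalized Cauchy–Schwarz for the positive form of G
  have hCS : ∀ x y : V, ⟪G x, y⟫^2 ≤ ⟪G x, x⟫ * ⟪G y, y⟫ := by
    intro x y
    have hquad : ∀ t : ℝ, 0 ≤ ⟪G y, y⟫ * (t * t) + (2 * ⟪G x, y⟫) * t + ⟪G x, x⟫ := by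
      intro t
      have h0 := hGpos (x + t • y)
      have hexp : ⟪G (x + t • y), x + t • y⟫ =
          ⟪G y, y⟫ * (t * t) + (2 * ⟪G x, y⟫) * t + ⟪G x, x⟫ := by
        rw [map_add, map_smul]
        simp only [inner_add_left, inner_add_right, real_inner_smul_left, real_inner_smul_right,
          smul_apply]
        have : ⟪G y, x⟫ = ⟪G x, y⟫ := by rw [hGsym y x, real_inner_comm]
        rw [this]
        ring
      linarith [hexp ▸ h0]
    have hdisc := discrim_le_zero hquad
    rw [discrim] at hdisc
    nlinarith
  -- norm of the inverse
  have hone : (1 : V →L[ℝ] V) ≠ 0 := by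
    intro h
    obtain ⟨x, hx⟩ := exists_ne (0 : V)
    have := congrArg (fun f : V →L[ℝ] V => f x) h
    simp at this
    exact hx this
  have hUinv : (0:ℝ) < ‖((u⁻¹ : (V →L[ℝ] V)ˣ) : V →L[ℝ] V)‖ := by
    rw [norm_pos_iff]
    intro h
    have : ((u⁻¹ : (V →L[ℝ] V)ˣ) : V →L[ℝ] V) * u = 1 := u.inv_mul
    rw [h, zero_mul] at this
    exact hone this.symm
  set κ : ℝ := ‖((u⁻¹ : (V →L[ℝ] V)ˣ) : V →L[ℝ] V)‖⁻¹ with hκ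
  have hκpos : 0 < κ := inv_pos.mpr hUinv
  have hlow : ∀ x : V, ‖x‖ = 1 → κ ≤ ‖G x‖ := by
    intro x hx
    have h1 : ((u⁻¹ : (V →L[ℝ] V)ˣ) : V →L[ℝ] V) (G x) = x := by
      have : (((u⁻¹ : (V →L[ℝ] V)ˣ) : V →L[ℝ] V) * u) x = x := by rw [u.inv_mul]; simp
      rwa [ContinuousLinearMap.mul_apply, hu] at this
    have h2 : (1:ℝ) ≤ ‖((u⁻¹ : (V →L[ℝ] V)ˣ) : V →L[ℝ] V)‖ * ‖G x‖ := by
      calc (1:ℝ) = ‖x‖ := hx.symm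
        _ = ‖((u⁻¹ : (V →L[ℝ] V)ˣ) : V →L[ℝ] V) (G x)‖ := by rw [h1]
        _ ≤ _ := le_opNorm _ _
    rw [hκ, inv_le_iff_one_le_mul₀' hUinv]
    linarith [mul_le_mul_of_nonneg_left (le_refl ‖G x‖) (le_of_lt hUinv)]
  -- choose ε and a near-maximizer
  set ε : ℝ := κ^4 / (‖G‖^3 + 1) with hε
  have hεpos : 0 < ε := by positivity
  obtain ⟨r, hrs, hrlt⟩ := exists_lt_of_lt_csSup hne (show M - ε < M by linarith)
  obtain ⟨x, hx1, hx2⟩ := hrs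
  have hGxx : ⟪G x, x⟫ < ε := by
    have hTxM : ⟪G x, x⟫ = M - ⟪T x, x⟫ := by
      rw [hGapp, inner_sub_left, real_inner_smul_left, real_inner_self_eq_norm_sq, hx1]
      ring
    rw [hTxM, hx2]
    linarith
  have hGx4 : ‖G x‖^4 ≤ ⟪G x, x⟫ * (‖G‖ * ‖G x‖^2) := by
    have h1 := hCS x (G x)
    have h2 : ⟪G (G x), G x⟫ ≤ ‖G‖ * ‖G x‖^2 := by
      calc ⟪G (G x), G x⟫ ≤ ‖G (G x)‖ * ‖G x‖ := real_inner_le_norm _ _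
        _ ≤ (‖G‖ * ‖G x‖) * ‖G x‖ := by gcongr; exact le_opNorm _ _
        _ = ‖G‖ * ‖G x‖^2 := by ring
    have h3 : ⟪G x, G x⟫ = ‖G x‖^2 := real_inner_self_eq_norm_sq _
    calc ‖G x‖^4 = (‖G x‖^2)^2 := by ring
      _ = ⟪G x, G x⟫^2 := by rw [h3]
      _ ≤ ⟪G x, x⟫ * ⟪G (G x), G x⟫ := by
          have := hCS x (G x)
          nlinarith [real_inner_comm (G x) (G (G x))]
      _ ≤ ⟪G x, x⟫ * (‖G‖ * ‖G x‖^2) := by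
          exact mul_le_mul_of_nonneg_left h2 (hGpos x)
  have hGxκ : κ ≤ ‖G x‖ := hlow x hx1
  have hGxnorm : ‖G x‖ ≤ ‖G‖ := by
    calc ‖G x‖ ≤ ‖G‖ * ‖x‖ := le_opNorm _ _
      _ = ‖G‖ := by rw [hx1]; ring
  have hGnn : 0 ≤ ‖G‖ := norm_nonneg _
  -- contradiction
  have hfinal : κ^4 ≤ ε * ‖G‖^3 := by
    have h1 : κ^4 ≤ ‖G x‖^4 := by
      exact pow_le_pow_left₀ (le_of_lt hκpos) hGxκ 4
    have h2 : ⟪G x, x⟫ * (‖G‖ * ‖G x‖^2) ≤ ε * (‖G‖ * ‖G‖^2) := by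
      have hGx2 : ‖G x‖^2 ≤ ‖G‖^2 := by nlinarith [norm_nonneg (G x)]
      have hq := hGpos x
      have hGG : 0 ≤ ‖G‖ * ‖G x‖^2 := by positivity
      have hGG2 : ‖G‖ * ‖G x‖^2 ≤ ‖G‖ * ‖G‖^2 := by nlinarith
      nlinarith [mul_le_mul hGxx.le hGG2 hGG hεpos.le]
    calc κ^4 ≤ ‖G x‖^4 := h1
      _ ≤ ⟪G x, x⟫ * (‖G‖ * ‖G x‖^2) := hGx4
      _ ≤ ε * (‖G‖ * ‖G‖^2) := h2
      _ = ε * ‖G‖^3 := by ring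
  have hcontra : ε * ‖G‖^3 < κ^4 := by
    rw [hε]
    rw [div_mul_eq_mul_div, div_lt_iff₀ (by positivity)]
    have h4 : 0 < κ^4 := pow_pos hκpos 4
    nlinarith
  linarith

omit [CompleteSpace V] in
lemma quadform_le_of_unit_le {T : V →L[ℝ] V} {r : ℝ} (hr : 0 ≤ r)
    (h : ∀ x : V, ‖x‖ = 1 → ⟪T x, x⟫ ≤ r) : ∀ x : V, ⟪T x, x⟫ ≤ r * ‖x‖^2 := by
  intro x
  rcases eq_or_ne x 0 with rfl | hx
  · rw [map_zero, real_inner_self_eq_norm_sq, norm_zero]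
    nlinarith
  · have hxpos : (0:ℝ) < ‖x‖ := norm_pos_iff.mpr hx
    have h1 := h _ (norm_smul_inv_norm (𝕜 := ℝ) hx)
    rw [map_smul] at h1
    simp only [real_inner_smul_left, real_inner_smul_right] at h1
    have h4 := mul_le_mul_of_nonneg_left h1 (le_of_lt (mul_pos hxpos hxpos))
    calc ⟪T x, x⟫ = (‖x‖ * ‖x‖) * (‖x‖⁻¹ * (‖x‖⁻¹ * ⟪T x, x⟫)) := by field_simp
      _ ≤ (‖x‖ * ‖x‖) * r := h4
      _ = r * ‖x‖^2 := by ring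

lemma norm_le_of_spectrum_Icc [Nontrivial V] (T : V →L[ℝ] V)
    (hT : ∀ x y : V, ⟪T x, y⟫ = ⟪x, T y⟫) {r : ℝ}
    (hσ : spectrum ℝ T ⊆ Set.Icc (-r) r) : ‖T‖ ≤ r := by
  -- the two endpoints
  have hM : sSup {t : ℝ | ∃ x : V, ‖x‖ = 1 ∧ ⟪T x, x⟫ = t} ∈ spectrum ℝ T :=
    sup_quadform_mem_spectrum T hT
  have hMr := hσ hM
  have hMneg : sSup {t : ℝ | ∃ x : V, ‖x‖ = 1 ∧ ⟪(-T) x, x⟫ = t} ∈ spectrum ℝ (-T) :=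
    sup_quadform_mem_spectrum (-T) (by intro x y; simp only [neg_apply, inner_neg_left,
      inner_neg_right, hT])
  set N := sSup {t : ℝ | ∃ x : V, ‖x‖ = 1 ∧ ⟪(-T) x, x⟫ = t} with hN
  have hNT : -N ∈ spectrum ℝ T := by
    rw [spectrum.mem_iff] at hMneg ⊢
    intro hunit
    apply hMneg
    have : algebraMap ℝ (V →L[ℝ] V) N - (-T) = -(algebraMap ℝ (V →L[ℝ] V) (-N) - T) := by
      simp [map_neg]; abel
    rw [this]
    exact hunit.neg
  have hNr := hσ hNT
  have hrnn : 0 ≤ r := by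
    rcases hMr with ⟨h1, h2⟩; linarith
  -- bound on unit sphere
  have hub : ∀ x : V, ‖x‖ = 1 → ⟪T x, x⟫ ≤ r := by
    intro x hx
    have hbdd : BddAbove {t : ℝ | ∃ x : V, ‖x‖ = 1 ∧ ⟪T x, x⟫ = t} := by
      refine ⟨‖T‖, ?_⟩
      rintro t ⟨x, hx, rfl⟩
      calc ⟪T x, x⟫ ≤ ‖T x‖ * ‖x‖ := real_inner_le_norm _ _
        _ ≤ ‖T‖ * ‖x‖ * ‖x‖ := by gcongr; exact T.le_opNorm x
        _ = ‖T‖ := by rw [hx]; ring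
    exact le_trans (le_csSup hbdd ⟨x, hx, rfl⟩) hMr.2
  have hlb : ∀ x : V, ‖x‖ = 1 → ⟪(-T) x, x⟫ ≤ r := by
    intro x hx
    have hbdd : BddAbove {t : ℝ | ∃ x : V, ‖x‖ = 1 ∧ ⟪(-T) x, x⟫ = t} := by
      refine ⟨‖T‖, ?_⟩
      rintro t ⟨x, hx, rfl⟩
      calc ⟪(-T) x, x⟫ ≤ ‖(-T) x‖ * ‖x‖ := real_inner_le_norm _ _
        _ ≤ ‖T‖ * ‖x‖ * ‖x‖ := by
            gcongr
            simpa using (-T).le_opNorm x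
        _ = ‖T‖ := by rw [hx]; ring
    have h1 : N ≤ r := by
      have := hNr.1
      linarith
    exact le_trans (le_csSup hbdd ⟨x, hx, rfl⟩) h1
  have hq1 := quadform_le_of_unit_le hrnn hub
  have hq2 := quadform_le_of_unit_le hrnn hlb
  -- polarization bound
  have hxy : ∀ x y : V, ⟪T x, y⟫ ≤ (r/2) * (‖x‖^2 + ‖y‖^2) := by
    intro x y
    have h1 := hq1 (x + y)
    have h2 : -⟪T (x - y), x - y⟫ ≤ r * ‖x - y‖^2 := by
      have h2' := hq2 (x - y)
      rwa [ContinuousLinearMap.neg_apply, inner_neg_left] at h2'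
    have hexp1 : ⟪T (x + y), x + y⟫ = ⟪T x, x⟫ + 2 * ⟪T x, y⟫ + ⟪T y, y⟫ := by
      rw [map_add]
      simp only [inner_add_left, inner_add_right]
      have : ⟪T y, x⟫ = ⟪T x, y⟫ := by rw [hT y x, real_inner_comm]
      rw [this]; ring
    have hexp2 : ⟪T (x - y), x - y⟫ = ⟪T x, x⟫ - 2 * ⟪T x, y⟫ + ⟪T y, y⟫ := by
      rw [map_sub]
      simp only [inner_sub_left, inner_sub_right]
      have : ⟪T y, x⟫ = ⟪T x, y⟫ := by rw [hT y x, real_inner_comm]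
      rw [this]; ring
    have hpar : ‖x + y‖^2 + ‖x - y‖^2 = 2 * (‖x‖^2 + ‖y‖^2) := by
      have := parallelogram_law_with_norm ℝ x y
      nlinarith [this]
    nlinarith [h1, h2, hexp1, hexp2, hpar]
  refine T.opNorm_le_bound hrnn fun x => ?_
  rcases eq_or_ne (T x) 0 with h0 | h0
  · rw [h0]; simp; positivity
  · have hTx : (0:ℝ) < ‖T x‖ := norm_pos_iff.mpr h0
    have := hxy x ((‖x‖ / ‖T x‖) • T x)
    rw [real_inner_smul_right] at this
    have hny : ‖(‖x‖ / ‖T x‖) • T x‖ = ‖x‖ := by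
      rw [norm_smul, Real.norm_eq_abs, abs_of_nonneg (by positivity)]
      field_simp
    rw [hny] at this
    have hinner : ⟪T x, T x⟫ = ‖T x‖^2 := real_inner_self_eq_norm_sq _
    rw [hinner] at this
    have hx2 : ‖x‖ / ‖T x‖ * ‖T x‖^2 = ‖x‖ * ‖T x‖ := by field_simp
    rw [hx2] at this
    rcases eq_or_ne x 0 with rfl | hx
    · simp at h0
    · have hxpos : (0:ℝ) < ‖x‖ := norm_pos_iff.mpr hx
      nlinarith [this]


end SpecAux

section ProjAux
variable {H : Type*} [NormedAddCommGroup H] [InnerProductSpace ℝ H] [CompleteSpace H]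

lemma proj_eq (U : Submodule ℝ H) [CompleteSpace U] :
    proj U = U.subtypeL ∘L orthogonalProjection U := by
  have h : HasOrthogonalProjection U := inferInstance
  rw [proj, dif_pos h]

lemma proj_apply (U : Submodule ℝ H) [CompleteSpace U] (x : H) :
    proj U x = ↑(orthogonalProjection U x) := by rw [proj_eq]; rfl

lemma proj_mem (U : Submodule ℝ H) [CompleteSpace U] (x : H) : proj U x ∈ U := by
  rw [proj_apply]; exact (orthogonalProjection U x).2

lemma proj_of_mem (U : Submodule ℝ H) [CompleteSpace U] {x : H} (hx : x ∈ U) :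
    proj U x = x := by
  rw [proj_apply]
  exact Submodule.starProjection_eq_self_iff.mpr hx

lemma inner_orthProj (U : Submodule ℝ H) [CompleteSpace U] (y : H) (v : U) :
    (⟪(orthogonalProjection U y : H), (v : H)⟫ : ℝ) = ⟪y, (v : H)⟫ := by
  have h := Submodule.sub_starProjection_mem_orthogonal (K := U) y
  have h0 : (⟪(v:H), y - ↑(orthogonalProjection U y)⟫ : ℝ) = 0 :=
    (Submodule.mem_orthogonal U _).1 h (v : H) v.2
  rw [inner_sub_right] at h0
  calc (⟪(orthogonalProjection U y : H), (v:H)⟫ : ℝ) = ⟪(v:H), (orthogonalProjection U y : H)⟫ :=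
        real_inner_comm _ _
    _ = ⟪(v:H), y⟫ := by linarith
    _ = ⟪y, (v:H)⟫ := real_inner_comm _ _

lemma hsNorm_neg (X : H →L[ℝ] H) : hsNorm (-X) = hsNorm X := by
  rw [hsNorm, hsNorm, hsq_neg]

lemma hsNorm_zero' : hsNorm (0 : H →L[ℝ] H) = 0 := by
  have h : hsNormSq (0 : H →L[ℝ] H) = 0 := by
    rw [hsNormSq_def]; simp
  rw [hsNorm, h]; simp


end ProjAux
set_option maxHeartbeats 2000000 in
/-- (Davis–Kahan.)  If the spectrum of `P_U A|_U` lies in `[a, b]`, the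
spectrum of `P_W B|_W` lies in `(−∞, a−δ] ∪ [b+δ, ∞)`, and `P_W P_U` is Hilbert–Schmidt,
then `δ ‖P_W P_U‖_F ≤ ‖P_W P_U A P_U − P_W B P_W P_U‖_F`. -/
theorem stmt13 {H : Type*} [NormedAddCommGroup H] [InnerProductSpace ℝ H] [CompleteSpace H]
    (A B : H →L[ℝ] H)
    (hAsa : ∀ x y : H, ⟪A x, y⟫ = ⟪x, A y⟫)
    (hBsa : ∀ x y : H, ⟪B x, y⟫ = ⟪x, B y⟫)
    (U W : Submodule ℝ H) [CompleteSpace U] [CompleteSpace W]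
    (hHS : hsNormSq ((proj W) ∘L (proj U)) ≠ ⊤)
    (a b δ : ℝ) (hδ : 0 < δ)
    (hspecA : spectrum ℝ (compressOp U A) ⊆ Set.Icc a b)
    (hspecB : spectrum ℝ (compressOp W B) ⊆ Set.Iic (a - δ) ∪ Set.Ici (b + δ)) :
    δ * hsNorm ((proj W) ∘L (proj U)) ≤
      hsNorm ((proj W) ∘L (proj U) ∘L A ∘L (proj U) - (proj W) ∘L B ∘L (proj W) ∘L (proj U)) := by
  classical
  rcases subsingleton_or_nontrivial U with hU | hU
  · have hzero : (proj W ∘L proj U : H →L[ℝ] H) = 0 := by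
      ext x
      have h0 : orthogonalProjection U x = 0 := Subsingleton.elim _ _
      rw [ContinuousLinearMap.comp_apply, ContinuousLinearMap.zero_apply, proj_apply U, h0,
        Submodule.coe_zero, map_zero]
    rw [hzero, hsNorm_zero', mul_zero]
    exact hsNorm_nonneg _
  rcases subsingleton_or_nontrivial W with hW | hW
  · have hzero : (proj W ∘L proj U : H →L[ℝ] H) = 0 := by
      ext x
      have h0 : orthogonalProjection W (proj U x) = 0 := Subsingleton.elim _ _
      rw [ContinuousLinearMap.comp_apply, ContinuousLinearMap.zero_apply, proj_apply W, h0,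
        Submodule.coe_zero]
    rw [hzero, hsNorm_zero', mul_zero]
    exact hsNorm_nonneg _
  set S : U →L[ℝ] U := compressOp U A with hSdef
  set R : W →L[ℝ] W := compressOp W B with hRdef
  have hSapp : ∀ u : U, S u = orthogonalProjection U (A (u : H)) := fun u => rfl
  have hRapp : ∀ w : W, R w = orthogonalProjection W (B (w : H)) := fun w => rfl
  have hSsym : ∀ u v : U, ⟪S u, v⟫ = ⟪u, S v⟫ := by
    intro u v
    have h1 : (⟪S u, v⟫ : ℝ) = ⟪A (u : H), (v : H)⟫ := by
      rw [Submodule.coe_inner, hSapp]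
      exact inner_orthProj U (A ↑u) v
    have h2 : (⟪u, S v⟫ : ℝ) = ⟪(u : H), A (v : H)⟫ := by
      rw [Submodule.coe_inner, hSapp, real_inner_comm]
      rw [inner_orthProj U (A ↑v) u]
      exact real_inner_comm _ _
    rw [h1, h2]
    exact hAsa _ _
  have hRsym : ∀ u v : W, ⟪R u, v⟫ = ⟪u, R v⟫ := by
    intro u v
    have h1 : (⟪R u, v⟫ : ℝ) = ⟪B (u : H), (v : H)⟫ := by
      rw [Submodule.coe_inner, hRapp]
      exact inner_orthProj W (B ↑u) v
    have h2 : (⟪u, R v⟫ : ℝ) = ⟪(u : H), B (v : H)⟫ := by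
      rw [Submodule.coe_inner, hRapp, real_inner_comm]
      rw [inner_orthProj W (B ↑v) u]
      exact real_inner_comm _ _
    rw [h1, h2]
    exact hBsa _ _
  have hab : a ≤ b := by
    obtain ⟨μ, hμ⟩ : (spectrum ℝ S).Nonempty := ⟨_, sup_quadform_mem_spectrum S hSsym⟩
    have h := hspecA hμ
    exact le_trans h.1 h.2
  set c : ℝ := (a + b) / 2 with hc
  set r : ℝ := (b - a) / 2 with hrr
  set s : ℝ := r + δ with hss
  have hrge : 0 ≤ r := by rw [hrr]; linarith
  have hspos : 0 < s := by rw [hss]; linarith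
  set S' : U →L[ℝ] U := S - algebraMap ℝ (U →L[ℝ] U) c with hS'def
  set R' : W →L[ℝ] W := R - algebraMap ℝ (W →L[ℝ] W) c with hR'def
  have halgU : ∀ (t : ℝ) (u : U), (algebraMap ℝ (U →L[ℝ] U) t) u = t • u := by
    intro t u
    simp [Algebra.algebraMap_eq_smul_one]
  have halgW : ∀ (t : ℝ) (u : W), (algebraMap ℝ (W →L[ℝ] W) t) u = t • u := by
    intro t u
    simp [Algebra.algebraMap_eq_smul_one]
  have hS'sym : ∀ u v : U, ⟪S' u, v⟫ = ⟪u, S' v⟫ := by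
    intro u v
    rw [hS'def]
    simp only [ContinuousLinearMap.sub_apply, halgU, inner_sub_left, inner_sub_right,
      real_inner_smul_left, real_inner_smul_right, hSsym]
  have hR'sym : ∀ u v : W, ⟪R' u, v⟫ = ⟪u, R' v⟫ := by
    intro u v
    rw [hR'def]
    simp only [ContinuousLinearMap.sub_apply, halgW, inner_sub_left, inner_sub_right,
      real_inner_smul_left, real_inner_smul_right, hRsym]
  have hσS' : spectrum ℝ S' ⊆ Set.Icc (-r) r := by
    intro t ht
    rw [hS'def, ← spectrum.sub_singleton_eq] at ht
    obtain ⟨x, hx, y, hy, rfl⟩ := ht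
    obtain ⟨hx1, hx2⟩ := hspecA hx
    rw [Set.mem_singleton_iff] at hy
    subst hy
    constructor <;> [rw [hrr, hc]; rw [hrr, hc]] <;> simp <;> linarith
  have hnS' : ‖S'‖ ≤ r := norm_le_of_spectrum_Icc S' hS'sym hσS'
  have hσR' : ∀ t ∈ spectrum ℝ R', t ≤ -s ∨ s ≤ t := by
    intro t ht
    rw [hR'def, ← spectrum.sub_singleton_eq] at ht
    obtain ⟨x, hx, y, hy, rfl⟩ := ht
    rw [Set.mem_singleton_iff] at hy
    subst hy
    rcases hspecB hx with h | h
    · left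
      rw [Set.mem_Iic] at h
      rw [hss, hrr, hc]; linarith
    · right
      rw [Set.mem_Ici] at h
      rw [hss, hrr, hc]; linarith
  have hIsUnit : IsUnit R' := by
    rw [← spectrum.zero_notMem_iff ℝ]
    intro h0
    rcases hσR' 0 h0 with h | h <;> linarith
  obtain ⟨u, hu⟩ := hIsUnit
  set VW : W →L[ℝ] W := ((u⁻¹ : (W →L[ℝ] W)ˣ) : W →L[ℝ] W) with hVWdef
  have hVR : ∀ w : W, VW (R' w) = w := by
    intro w
    have h1 : ((u⁻¹ : (W →L[ℝ] W)ˣ) : W →L[ℝ] W) * R' = 1 := by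
      rw [← hu]; exact u.inv_mul
    calc VW (R' w) = (VW * R') w := rfl
      _ = (1 : W →L[ℝ] W) w := by rw [hVWdef, h1]
      _ = w := rfl
  have hRV : ∀ w : W, R' (VW w) = w := by
    intro w
    have h1 : R' * ((u⁻¹ : (W →L[ℝ] W)ˣ) : W →L[ℝ] W) = 1 := by
      rw [← hu]; exact u.mul_inv
    calc R' (VW w) = (R' * VW) w := rfl
      _ = (1 : W →L[ℝ] W) w := by rw [hVWdef, h1]
      _ = w := rfl
  have hVWsym : ∀ x y : W, ⟪VW x, y⟫ = ⟪x, VW y⟫ := by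
    intro x y
    calc (⟪VW x, y⟫ : ℝ) = ⟪VW x, R' (VW y)⟫ := by rw [hRV]
      _ = ⟪R' (VW x), VW y⟫ := (hR'sym _ _).symm
      _ = ⟪x, VW y⟫ := by rw [hRV]
  have hσVW : spectrum ℝ VW ⊆ Set.Icc (-(s⁻¹)) s⁻¹ := by
    intro t ht
    have ht0 : t ≠ 0 := by
      intro h
      subst h
      exact (spectrum.zero_notMem_iff ℝ).mpr (u⁻¹).isUnit ht
    have hinv : t⁻¹ ∈ spectrum ℝ R' := by
      have h1 := (spectrum.inv_mem_iff (r := Units.mk0 t ht0) (a := u⁻¹)).mp (by simpa [hVWdef] using ht)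
      simpa [hu] using h1
    have htinv : 0 < |t⁻¹| := by positivity
    rcases hσR' _ hinv with h | h
    · have htneg : t⁻¹ < 0 := by linarith
      have htneg' : t < 0 := inv_neg''.mp htneg
      have h2 : s ≤ -t⁻¹ := by linarith
      have h3 : -t = (-t⁻¹)⁻¹ := by rw [← inv_neg, inv_inv]
      constructor
      · have h4 : -t ≤ s⁻¹ := by
          rw [h3]
          exact inv_anti₀ hspos h2
        linarith
      · linarith [le_of_lt (neg_neg_iff_pos.mpr (neg_pos.mpr htneg')), inv_nonneg.mpr (le_of_lt hspos)]
    · have htpos : 0 < t⁻¹ := lt_of_lt_of_le hspos h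
      have htpos' : 0 < t := inv_pos.mp htpos
      have h4 : t ≤ s⁻¹ := by
        rw [show t = (t⁻¹)⁻¹ by rw [inv_inv]]
        exact inv_anti₀ hspos h
      constructor
      · have : (0:ℝ) ≤ s⁻¹ := inv_nonneg.mpr (le_of_lt hspos)
        linarith
      · exact h4
  have hnVW : ‖VW‖ ≤ s⁻¹ := norm_le_of_spectrum_Icc VW hVWsym hσVW
  -- lift to H
  set C : H →L[ℝ] H := proj W ∘L proj U with hCdef
  set SH : H →L[ℝ] H := U.subtypeL ∘L (S' ∘L (orthogonalProjection U : H →L[ℝ] U)) with hSHdef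
  set RH : H →L[ℝ] H := W.subtypeL ∘L (R' ∘L (orthogonalProjection W : H →L[ℝ] W)) with hRHdef
  set VH : H →L[ℝ] H := W.subtypeL ∘L (VW ∘L (orthogonalProjection W : H →L[ℝ] W)) with hVHdef
  have hid1 : C ∘L SH - RH ∘L C =
      (proj W) ∘L (proj U) ∘L A ∘L (proj U) - (proj W) ∘L B ∘L (proj W) ∘L (proj U) := by
    ext x
    simp only [hCdef, hSHdef, hRHdef, hS'def, hR'def, hSdef, hRdef, compressOp,
      ContinuousLinearMap.comp_apply, ContinuousLinearMap.sub_apply, halgU, halgW,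
      proj_apply, Submodule.subtypeL_apply, map_sub, map_smul,
      orthogonalProjection_mem_subspace_eq_self, Submodule.coe_sub, Submodule.coe_smul]
    abel
  have hid2 : VH ∘L (RH ∘L C) = C := by
    ext x
    simp only [hVHdef, hRHdef, hCdef, ContinuousLinearMap.comp_apply,
      Submodule.subtypeL_apply, proj_apply, orthogonalProjection_mem_subspace_eq_self]
    rw [hVR]
  have hnSH : ‖SH‖ ≤ r := by
    rw [hSHdef]
    calc ‖U.subtypeL ∘L (S' ∘L (orthogonalProjection U : H →L[ℝ] U))‖
        ≤ ‖U.subtypeL‖ * ‖S' ∘L (orthogonalProjection U : H →L[ℝ] U)‖ :=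
          ContinuousLinearMap.opNorm_comp_le _ _
      _ ≤ 1 * (‖S'‖ * ‖(orthogonalProjection U : H →L[ℝ] U)‖) := by
          have h1 := ContinuousLinearMap.opNorm_comp_le S' (orthogonalProjection U : H →L[ℝ] U)
          have h2 := Submodule.norm_subtypeL_le U
          have h3 := norm_nonneg (S' ∘L (orthogonalProjection U : H →L[ℝ] U))
          exact mul_le_mul h2 h1 h3 zero_le_one
      _ ≤ 1 * (r * 1) := by
          have h1 := orthogonalProjection_norm_le U
          have h2 : ‖S'‖ * ‖(orthogonalProjection U : H →L[ℝ] U)‖ ≤ r * 1 :=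
            mul_le_mul hnS' h1 (norm_nonneg (orthogonalProjection U : H →L[ℝ] U)) hrge
          linarith
      _ = r := by ring
  have hnVH : ‖VH‖ ≤ s⁻¹ := by
    rw [hVHdef]
    calc ‖W.subtypeL ∘L (VW ∘L (orthogonalProjection W : H →L[ℝ] W))‖
        ≤ ‖W.subtypeL‖ * ‖VW ∘L (orthogonalProjection W : H →L[ℝ] W)‖ :=
          ContinuousLinearMap.opNorm_comp_le _ _
      _ ≤ 1 * (‖VW‖ * ‖(orthogonalProjection W : H →L[ℝ] W)‖) := by
          have h1 := ContinuousLinearMap.opNorm_comp_le VW (orthogonalProjection W : H →L[ℝ] W)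
          have h2 := Submodule.norm_subtypeL_le W
          have h3 := norm_nonneg (VW ∘L (orthogonalProjection W : H →L[ℝ] W))
          exact mul_le_mul h2 h1 h3 zero_le_one
      _ ≤ 1 * (s⁻¹ * 1) := by
          have h1 := orthogonalProjection_norm_le W
          have h2 : ‖VW‖ * ‖(orthogonalProjection W : H →L[ℝ] W)‖ ≤ s⁻¹ * 1 :=
            mul_le_mul hnVW h1 (norm_nonneg (orthogonalProjection W : H →L[ℝ] W))
              (inv_nonneg.mpr (le_of_lt hspos))
          linarith
      _ = s⁻¹ := by ring
  -- HS norm bookkeeping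
  have hKfin : hsNormSq C ≠ ⊤ := hHS
  have hCSfin : hsNormSq (C ∘L SH) ≠ ⊤ := by
    refine ne_top_of_le_ne_top (ENNReal.mul_ne_top (by simp [ENNReal.pow_ne_top]) hKfin)
      (hsq_comp_right_le C SH)
  have hRCfin : hsNormSq (RH ∘L C) ≠ ⊤ := by
    refine ne_top_of_le_ne_top (ENNReal.mul_ne_top (by simp [ENNReal.pow_ne_top]) hKfin)
      (hsq_comp_le RH C)
  have hEfin : hsNormSq ((proj W) ∘L (proj U) ∘L A ∘L (proj U) -
      (proj W) ∘L B ∘L (proj W) ∘L (proj U)) ≠ ⊤ := by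
    rw [← hid1]
    exact hsq_sub_ne_top hCSfin hRCfin
  have hsub : RH ∘L C = C ∘L SH + -((proj W) ∘L (proj U) ∘L A ∘L (proj U) -
      (proj W) ∘L B ∘L (proj W) ∘L (proj U)) := by
    rw [← hid1]; abel
  have hstep1 : hsNorm C ≤ s⁻¹ * hsNorm (RH ∘L C) := by
    calc hsNorm C = hsNorm (VH ∘L (RH ∘L C)) := by rw [hid2]
      _ ≤ ‖VH‖ * hsNorm (RH ∘L C) := hsNorm_comp_le VH hRCfin
      _ ≤ s⁻¹ * hsNorm (RH ∘L C) := mul_le_mul_of_nonneg_right hnVH (hsNorm_nonneg _)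
  have hstep2 : hsNorm (RH ∘L C) ≤ r * hsNorm C +
      hsNorm ((proj W) ∘L (proj U) ∘L A ∘L (proj U) -
        (proj W) ∘L B ∘L (proj W) ∘L (proj U)) := by
    rw [hsub]
    have hnegfin : hsNormSq (-((proj W) ∘L (proj U) ∘L A ∘L (proj U) -
        (proj W) ∘L B ∘L (proj W) ∘L (proj U))) ≠ ⊤ := by
      rw [hsq_neg]; exact hEfin
    calc hsNorm (C ∘L SH + -((proj W) ∘L (proj U) ∘L A ∘L (proj U) -
          (proj W) ∘L B ∘L (proj W) ∘L (proj U)))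
        ≤ hsNorm (C ∘L SH) + hsNorm (-((proj W) ∘L (proj U) ∘L A ∘L (proj U) -
          (proj W) ∘L B ∘L (proj W) ∘L (proj U))) := hsNorm_add_le hCSfin hnegfin
      _ ≤ r * hsNorm C + hsNorm ((proj W) ∘L (proj U) ∘L A ∘L (proj U) -
          (proj W) ∘L B ∘L (proj W) ∘L (proj U)) := by
          have h1 : hsNorm (C ∘L SH) ≤ r * hsNorm C :=
            le_trans (hsNorm_comp_right_le SH hKfin)
              (mul_le_mul_of_nonneg_right hnSH (hsNorm_nonneg _))
          rw [hsNorm_neg]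
          linarith
  have hmain : hsNorm C ≤ s⁻¹ * (r * hsNorm C +
      hsNorm ((proj W) ∘L (proj U) ∘L A ∘L (proj U) -
        (proj W) ∘L B ∘L (proj W) ∘L (proj U))) :=
    le_trans hstep1 (mul_le_mul_of_nonneg_left hstep2 (inv_nonneg.mpr (le_of_lt hspos)))
  have h1 : s * hsNorm C ≤ r * hsNorm C +
      hsNorm ((proj W) ∘L (proj U) ∘L A ∘L (proj U) -
        (proj W) ∘L B ∘L (proj W) ∘L (proj U)) := by
    have h2 := mul_le_mul_of_nonneg_left hmain (le_of_lt hspos)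
    rwa [← mul_assoc, mul_inv_cancel₀ (ne_of_gt hspos), one_mul] at h2
  have hseq : s = r + δ := hss
  rw [hseq] at h1
  rw [hCdef] at h1 ⊢
  linarith


end
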